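/- Suppose ‖x^(i)‖₂ ≤ 1 for all i ∈ [n] and Assumption I holds with constant a ∈ (0,1). Then (1/n)·Σ_{i=1}^n E_{y ~ N(⟨w*,x^(i)⟩,1,S)}[(y − ⟨w*,x^(i)⟩)²] · ‖x^(i)‖₂² ≤ 2·log(1/a) + 4. -/

import Mathlib

open MeasureTheory ProbabilityTheory Real
open scoped RealInnerProductSpace ENNReal
open Filter Set Topology
open scoped NNReal

/-- The survival probability `α(μ; S) = N(μ,1)(S)`. -/
noncomputable def survival (μ : ℝ) (S : Set ℝ) : ℝ :=
  (gaussianReal μ 1 S).toReal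

/-- The truncated Gaussian `N(μ,1,S)`, i.e. `N(μ,1)` conditioned on `S`. -/
noncomputable def truncGaussian (μ : ℝ) (S : Set ℝ) : Measure ℝ :=
  (gaussianReal μ 1)[|S]

/-- Assumption I (constant survival probability), stated in the Loewner order via
quadratic forms: `∑ᵢ log(1/α(w*,xⁱ;S)) xⁱ xⁱᵀ ⪯ log(1/a) ∑ᵢ xⁱ xⁱᵀ`. -/
def AssumptionI {k n : ℕ} (S : Set ℝ) (x : Fin n → EuclideanSpace ℝ (Fin k))
    (wstar : EuclideanSpace ℝ (Fin k)) (a : ℝ) : Prop :=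
  ∀ v : EuclideanSpace ℝ (Fin k),
    ∑ i, Real.log (1 / survival ⟪wstar, x i⟫ S) * ⟪v, x i⟫ ^ 2 ≤
      Real.log (1 / a) * ∑ i, ⟪v, x i⟫ ^ 2

noncomputable def phi0 (z : ℝ) : ℝ := (Real.sqrt (2 * π))⁻¹ * Real.exp (-z ^ 2 / 2)

lemma phi0_eq : gaussianPDFReal 0 1 = phi0 := by
  funext z
  simp [gaussianPDFReal, phi0]

lemma phi0_nonneg (z : ℝ) : 0 ≤ phi0 z := by
  unfold phi0; positivity

lemma integrable_phi0 : Integrable phi0 := phi0_eq ▸ integrable_gaussianPDFReal 0 1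

lemma integral_phi0 : ∫ z, phi0 z = 1 := phi0_eq ▸ integral_gaussianPDFReal_eq_one 0 one_ne_zero

lemma integrable_sq_phi0 : Integrable (fun z => phi0 z * z ^ 2) := by
  have h := integrable_rpow_mul_exp_neg_mul_sq (b := 1/2) (by norm_num) (s := 2) (by norm_num)
  have h2 := h.const_mul ((Real.sqrt (2 * π))⁻¹)
  refine h2.congr (Filter.Eventually.of_forall fun z => ?_)
  simp only []
  rw [show ((2:ℝ)) = ((2:ℕ):ℝ) by norm_num, Real.rpow_natCast]
  unfold phi0
  ring_nf

lemma integrable_poly_phi0 (a b : ℝ) : Integrable (fun z => phi0 z * (a * z ^ 2 + b)) := by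
  have h := ((integrable_sq_phi0.const_mul a).add (integrable_phi0.const_mul b))
  refine h.congr (Filter.Eventually.of_forall fun z => ?_)
  simp only [Pi.add_apply]
  ring

lemma hasDerivAt_phi0 (z : ℝ) : HasDerivAt phi0 (-z * phi0 z) z := by
  have h1 : HasDerivAt (fun z : ℝ => -z ^ 2 / 2) (-z) z := by
    have := ((hasDerivAt_pow 2 z).neg).div_const 2
    refine this.congr_deriv ?_
    simp; ring
  have h2 := h1.exp
  have h3 := h2.const_mul ((Real.sqrt (2 * π))⁻¹)
  refine h3.congr_deriv ?_
  unfold phi0; ring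

lemma tail_bound {s : ℝ} (hs : 1 ≤ s) :
    ∫ z in Ioi s, phi0 z * (z ^ 2 - s ^ 2) ≤ phi0 s := by
  set K : ℝ := s ^ 2 - 1 with hK
  have hK0 : 0 ≤ K := by nlinarith
  set F : ℝ → ℝ := fun z => (z - K * (z / (z ^ 2 + 1))) * phi0 z with hF
  set F' : ℝ → ℝ := fun z => -(((z ^ 2 - s ^ 2) + 2 * K / (z ^ 2 + 1) ^ 2) * phi0 z) with hF'
  have hz1 : ∀ z : ℝ, (z : ℝ) ^ 2 + 1 ≠ 0 := fun z => by positivity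
  have hderiv : ∀ z : ℝ, HasDerivAt F (F' z) z := by
    intro z
    have hdiv : HasDerivAt (fun z : ℝ => z / (z ^ 2 + 1))
        ((1 * (z ^ 2 + 1) - z * (2 * z)) / ((z ^ 2 + 1) ^ 2)) z := by
      have := (hasDerivAt_id z).div ((hasDerivAt_pow 2 z).add_const 1) (hz1 z)
      refine this.congr_deriv ?_
      simp
    have hcd : HasDerivAt (fun z : ℝ => z - K * (z / (z ^ 2 + 1)))
        (1 - K * ((1 * (z ^ 2 + 1) - z * (2 * z)) / ((z ^ 2 + 1) ^ 2))) z :=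
      (hasDerivAt_id z).sub (hdiv.const_mul K)
    have hmul := hcd.mul (hasDerivAt_phi0 z)
    refine hmul.congr_deriv ?_
    rw [hF', hK]
    have h := hz1 z
    field_simp
    ring
  have hF'nonpos : ∀ z ∈ Ioi s, F' z ≤ 0 := by
    intro z hz
    rw [hF']
    have h1 : 0 ≤ z ^ 2 - s ^ 2 := by
      have : s ≤ z := le_of_lt hz
      nlinarith
    have h2 : 0 ≤ 2 * K / (z ^ 2 + 1) ^ 2 := by positivity
    have h3 := phi0_nonneg z
    simp only [neg_nonpos]
    positivity
  have htendsto : Tendsto F atTop (𝓝 0) := by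
    have hzphi : Tendsto (fun z : ℝ => z * phi0 z) atTop (𝓝 0) := by
      have hexp0 : Tendsto (fun z : ℝ => (Real.sqrt (2 * π))⁻¹ * Real.exp (1 - z ^ 2 / 4))
          atTop (𝓝 0) := by
        have h1 : Tendsto (fun z : ℝ => z ^ 2 / 4) atTop atTop :=
          (tendsto_pow_atTop two_ne_zero).atTop_div_const (by norm_num)
        have h2 : Tendsto (fun z : ℝ => 1 - z ^ 2 / 4) atTop atBot := by
          have := tendsto_neg_atBot_iff.mpr h1
          exact tendsto_atBot_add_const_left _ 1 this
        have := Real.tendsto_exp_atBot.comp h2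
        simpa using (this.const_mul ((Real.sqrt (2 * π))⁻¹))
      apply squeeze_zero' (g := fun z => (Real.sqrt (2 * π))⁻¹ * Real.exp (1 - z ^ 2 / 4))
      · filter_upwards [eventually_ge_atTop (0 : ℝ)] with z hz
        have := phi0_nonneg z
        positivity
      · filter_upwards [eventually_ge_atTop (0 : ℝ)] with z hz
        have h1 : z ≤ Real.exp (1 + z ^ 2 / 4) := by
          have h2 : z + 1 ≤ Real.exp z := Real.add_one_le_exp z
          have h3 : Real.exp z ≤ Real.exp (1 + z ^ 2 / 4) :=
            Real.exp_le_exp.mpr (by nlinarith [sq_nonneg (z - 2)])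
          linarith
        unfold phi0
        have hb : z * Real.exp (-z ^ 2 / 2) ≤ Real.exp (1 - z ^ 2 / 4) := by
          calc z * Real.exp (-z ^ 2 / 2) ≤ Real.exp (1 + z ^ 2 / 4) * Real.exp (-z ^ 2 / 2) :=
                mul_le_mul_of_nonneg_right h1 (Real.exp_nonneg _)
            _ = Real.exp (1 - z ^ 2 / 4) := by rw [← Real.exp_add]; ring_nf
        have hs2 : (0:ℝ) ≤ (Real.sqrt (2 * π))⁻¹ := by positivity
        calc z * ((Real.sqrt (2 * π))⁻¹ * Real.exp (-z ^ 2 / 2))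
            = (Real.sqrt (2 * π))⁻¹ * (z * Real.exp (-z ^ 2 / 2)) := by ring
          _ ≤ (Real.sqrt (2 * π))⁻¹ * Real.exp (1 - z ^ 2 / 4) :=
              mul_le_mul_of_nonneg_left hb hs2
      · exact hexp0
    apply squeeze_zero' (g := fun z => z * phi0 z)
    · filter_upwards [eventually_ge_atTop s] with z hz
      rw [hF]
      have hz0 : (0:ℝ) < z := lt_of_lt_of_le (by linarith) hz
      have h2 : K * (z / (z ^ 2 + 1)) ≤ z := by
        rw [mul_div_assoc', div_le_iff₀ (by positivity : (0:ℝ) < z ^ 2 + 1)]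
        have hs2z : s ^ 2 ≤ z ^ 2 := by nlinarith
        rw [hK]
        nlinarith
      exact mul_nonneg (by linarith) (phi0_nonneg z)
    · filter_upwards [eventually_ge_atTop (max s 0)] with z hz
      rw [hF]
      have hz0 : (0:ℝ) ≤ z := le_trans (le_max_right s 0) hz
      have h1 : z - K * (z / (z ^ 2 + 1)) ≤ z := by
        have : 0 ≤ K * (z / (z ^ 2 + 1)) := by positivity
        linarith
      exact mul_le_mul_of_nonneg_right h1 (phi0_nonneg z)
    · exact hzphi
  have hint : ∫ z in Ioi s, F' z = 0 - F s :=
    integral_Ioi_of_hasDerivAt_of_nonpos' (fun z _ => hderiv z) hF'nonpos htendsto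
  have hF'integrable : IntegrableOn F' (Ioi s) :=
    integrableOn_Ioi_deriv_of_nonpos' (fun z _ => hderiv z) hF'nonpos htendsto
  have hmono : ∫ z in Ioi s, phi0 z * (z ^ 2 - s ^ 2) ≤ ∫ z in Ioi s, -F' z := by
    apply setIntegral_mono_on
    · exact ((integrable_poly_phi0 1 (-s^2)).congr
        (Filter.Eventually.of_forall fun z => by ring)).integrableOn
    · exact hF'integrable.neg
    · exact measurableSet_Ioi
    · intro z hz
      rw [hF']
      have h2 : 0 ≤ 2 * K / (z ^ 2 + 1) ^ 2 * phi0 z := by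
        have := phi0_nonneg z; positivity
      nlinarith [phi0_nonneg z]
  have hval : ∫ z in Ioi s, -F' z = F s := by
    rw [integral_neg, hint]; ring
  have hFs : F s ≤ phi0 s := by
    rw [hF, hK]
    have heq : s - (s ^ 2 - 1) * (s / (s ^ 2 + 1)) = 2 * s / (s ^ 2 + 1) := by
      field_simp
      ring
    have h1 : 2 * s / (s ^ 2 + 1) ≤ 1 := by
      rw [div_le_one (by positivity)]
      nlinarith [sq_nonneg (s - 1)]
    calc (s - (s ^ 2 - 1) * (s / (s ^ 2 + 1))) * phi0 s
        = (2 * s / (s ^ 2 + 1)) * phi0 s := by rw [heq]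
      _ ≤ 1 * phi0 s := mul_le_mul_of_nonneg_right h1 (phi0_nonneg s)
      _ = phi0 s := one_mul _
  calc ∫ z in Ioi s, phi0 z * (z ^ 2 - s ^ 2) ≤ ∫ z in Ioi s, -F' z := hmono
    _ = F s := hval
    _ ≤ phi0 s := hFs

lemma tail_bound' {s : ℝ} (hs : 1 ≤ s) :
    ∫ z in Iic (-s), phi0 z * (z ^ 2 - s ^ 2) ≤ phi0 s := by
  have h := integral_comp_neg_Ioi s (fun z => phi0 z * (z ^ 2 - s ^ 2))
  rw [← h]
  have heq : ∀ z : ℝ, phi0 (-z) * ((-z) ^ 2 - s ^ 2) = phi0 z * (z ^ 2 - s ^ 2) := by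
    intro z
    unfold phi0
    ring_nf
  calc ∫ z in Ioi s, phi0 (-z) * ((-z) ^ 2 - s ^ 2)
      = ∫ z in Ioi s, phi0 z * (z ^ 2 - s ^ 2) := by
        exact setIntegral_congr_fun measurableSet_Ioi (fun z _ => heq z)
    _ ≤ phi0 s := tail_bound hs

lemma core_bound {S : Set ℝ} (hS : MeasurableSet S) (hα : 0 < ∫ z in S, phi0 z) :
    ∫ z in S, phi0 z * z ^ 2 ≤ (2 * Real.log (1 / ∫ z in S, phi0 z) + 4) * ∫ z in S, phi0 z := by
  set α : ℝ := ∫ z in S, phi0 z with hαdef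
  have hα1 : α ≤ 1 := by
    rw [hαdef, ← integral_phi0]
    exact setIntegral_le_integral integrable_phi0
      (Filter.Eventually.of_forall fun z => phi0_nonneg z)
  set L : ℝ := Real.log (1 / α) with hL
  have hL0 : 0 ≤ L := Real.log_nonneg (one_le_one_div hα hα1)
  set t : ℝ := 2 * L + 2 with ht
  have ht2 : 2 ≤ t := by linarith
  set s : ℝ := Real.sqrt t with hsdef
  have hs1 : 1 ≤ s := by
    rw [hsdef, show (1:ℝ) = Real.sqrt 1 by simp]
    exact Real.sqrt_le_sqrt (by linarith)
  have hst : s ^ 2 = t := Real.sq_sqrt (by linarith)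
  -- φ s ≤ α / 2
  have hphis : phi0 s ≤ α / 2 := by
    have hexp : Real.exp (-s ^ 2 / 2) = α * Real.exp (-1) := by
      rw [hst, ht]
      have h1 : -(2 * L + 2) / 2 = -L + -1 := by ring
      rw [h1, Real.exp_add]
      congr 1
      rw [hL, one_div, Real.log_inv, neg_neg, Real.exp_log hα]
    unfold phi0
    rw [hexp]
    have h2 : (2:ℝ) ≤ Real.sqrt (2 * π) * Real.exp 1 := by
      have hp : (1:ℝ) ≤ Real.sqrt (2 * π) := by
        rw [show (1:ℝ) = Real.sqrt 1 by simp]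
        exact Real.sqrt_le_sqrt (by nlinarith [Real.pi_gt_three])
      have he : (2:ℝ) ≤ Real.exp 1 := by
        have := Real.add_one_le_exp 1
        linarith
      nlinarith [Real.exp_pos 1]
    have hkey : (Real.sqrt (2 * π) * Real.exp 1)⁻¹ ≤ (2:ℝ)⁻¹ :=
      inv_anti₀ (by norm_num) h2
    calc (Real.sqrt (2 * π))⁻¹ * (α * Real.exp (-1))
        = α * (Real.sqrt (2 * π) * Real.exp 1)⁻¹ := by
          rw [Real.exp_neg, mul_inv]; ring
      _ ≤ α * (2:ℝ)⁻¹ := mul_le_mul_of_nonneg_left hkey (le_of_lt hα)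
      _ = α / 2 := by ring
  set A : Set ℝ := Iic (-s) ∪ Ioi s with hA
  have hAmeas : MeasurableSet A := measurableSet_Iic.union measurableSet_Ioi
  have hint1 : IntegrableOn (fun z => phi0 z * (z ^ 2 - t)) S :=
    ((integrable_poly_phi0 1 (-t)).congr
      (Filter.Eventually.of_forall fun z => by ring)).integrableOn
  have hintA : IntegrableOn (fun z => phi0 z * (z ^ 2 - t)) A :=
    ((integrable_poly_phi0 1 (-t)).congr
      (Filter.Eventually.of_forall fun z => by ring)).integrableOn
  -- split: ∫_S φ z² = ∫_S φ(z²−t) + t α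
  have hsplit : ∫ z in S, phi0 z * z ^ 2 = (∫ z in S, phi0 z * (z ^ 2 - t)) + t * α := by
    have : ∀ z : ℝ, phi0 z * z ^ 2 = phi0 z * (z ^ 2 - t) + t * phi0 z := fun z => by ring
    rw [integral_congr_ae (Filter.Eventually.of_forall fun z => this z),
      integral_add hint1 (integrable_phi0.integrableOn.const_mul t),
      integral_const_mul, hαdef]
  -- ∫_S φ(z²−t) ≤ ∫_A φ(z²−t)
  have hstep : ∫ z in S, phi0 z * (z ^ 2 - t) ≤ ∫ z in A, phi0 z * (z ^ 2 - t) := by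
    have hSsplit : S = (S ∩ A) ∪ (S \ A) := (Set.inter_union_diff S A).symm
    have hdisj : Disjoint (S ∩ A) (S \ A) :=
      Set.disjoint_sdiff_right.mono_left Set.inter_subset_right
    have h1 : ∫ z in S, phi0 z * (z ^ 2 - t)
        = (∫ z in S ∩ A, phi0 z * (z ^ 2 - t)) + ∫ z in S \ A, phi0 z * (z ^ 2 - t) := by
      rw [← setIntegral_union hdisj (hS.diff hAmeas)
        (hint1.mono_set Set.inter_subset_left) (hint1.mono_set Set.diff_subset),
        ← hSsplit]
    have h2 : ∫ z in S \ A, phi0 z * (z ^ 2 - t) ≤ 0 := by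
      apply setIntegral_nonpos (hS.diff hAmeas)
      intro z hz
      have hzA : z ∉ A := hz.2
      rw [hA] at hzA
      simp only [Set.mem_union, Set.mem_Iic, Set.mem_Ioi, not_or, not_le, not_lt] at hzA
      have hz2 : z ^ 2 ≤ s ^ 2 := sq_le_sq' (by linarith [hzA.1]) hzA.2
      have : z ^ 2 - t ≤ 0 := by rw [← hst]; linarith
      exact mul_nonpos_of_nonneg_of_nonpos (phi0_nonneg z) this
    have h3 : ∫ z in S ∩ A, phi0 z * (z ^ 2 - t) ≤ ∫ z in A, phi0 z * (z ^ 2 - t) := by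
      apply setIntegral_mono_set hintA
      · rw [Filter.EventuallyLE, ae_restrict_iff' hAmeas]
        refine Filter.Eventually.of_forall fun z hz => ?_
        rw [hA] at hz
        have hz2 : s ^ 2 ≤ z ^ 2 := by
          rcases hz with hz | hz
          · simp only [Set.mem_Iic] at hz
            nlinarith
          · simp only [Set.mem_Ioi] at hz
            nlinarith
        have : 0 ≤ z ^ 2 - t := by rw [← hst]; linarith
        exact mul_nonneg (phi0_nonneg z) this
      · exact (Set.inter_subset_right).eventuallyLE
    linarith
  -- ∫_A ≤ 2 φ s
  have hstepA : ∫ z in A, phi0 z * (z ^ 2 - t) ≤ 2 * phi0 s := by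
    have hdisj2 : Disjoint (Iic (-s)) (Ioi s) := by
      apply Set.Iic_disjoint_Ioi
      linarith
    rw [hA, setIntegral_union hdisj2 measurableSet_Ioi
      (hintA.mono_set Set.subset_union_left) (hintA.mono_set Set.subset_union_right)]
    have h1 := tail_bound' hs1
    have h2 := tail_bound hs1
    rw [hst] at h1 h2
    linarith
  calc ∫ z in S, phi0 z * z ^ 2 = (∫ z in S, phi0 z * (z ^ 2 - t)) + t * α := hsplit
    _ ≤ 2 * phi0 s + t * α := by linarith [le_trans hstep hstepA]
    _ ≤ α + t * α := by linarith
    _ ≤ (2 * L + 4) * α := by nlinarith [hα]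

lemma gauss_setIntegral {T : Set ℝ} (hT : MeasurableSet T) (h : ℝ → ℝ) :
    ∫ z in T, h z ∂(gaussianReal 0 1) = ∫ z in T, phi0 z * h z := by
  rw [gaussianReal_of_var_ne_zero 0 one_ne_zero]
  have hd : gaussianPDF 0 1 = fun z => ((Real.toNNReal (phi0 z) : ℝ≥0) : ℝ≥0∞) := by
    funext z
    rw [gaussianPDF, phi0_eq]
    rfl
  have hmphi : Measurable phi0 := phi0_eq ▸ measurable_gaussianPDFReal 0 1
  rw [hd, setIntegral_withDensity_eq_setIntegral_smul hmphi.real_toNNReal h hT]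
  refine setIntegral_congr_fun hT fun z _ => ?_
  simp [NNReal.smul_def, Real.coe_toNNReal _ (phi0_nonneg z)]

lemma gauss_measure_toReal {T : Set ℝ} (hT : MeasurableSet T) :
    (gaussianReal 0 1 T).toReal = ∫ z in T, phi0 z := by
  rw [gaussianReal_apply_eq_integral 0 one_ne_zero T, ENNReal.toReal_ofReal, phi0_eq]
  rw [phi0_eq]
  exact integral_nonneg fun z => phi0_nonneg z

lemma cond_bound (μ : ℝ) {S : Set ℝ} (hS : MeasurableSet S) :
    ∫ y, (y - μ) ^ 2 ∂(truncGaussian μ S) ≤ 2 * Real.log (1 / survival μ S) + 4 := by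
  by_cases h0 : gaussianReal μ 1 S = 0
  · have : truncGaussian μ S = 0 := by
      rw [truncGaussian, ProbabilityTheory.cond, Measure.restrict_eq_zero.mpr h0, smul_zero]
    rw [this, integral_zero_measure]
    have hs0 : survival μ S = 0 := by rw [survival, h0, ENNReal.toReal_zero]
    rw [hs0]
    simp only [div_zero, Real.log_zero]
    norm_num
  · set S' : Set ℝ := (fun z => μ + z) ⁻¹' S with hS'
    have hmeas' : MeasurableSet S' := hS.preimage (measurable_const.add measurable_id)
    have hmb : Measurable fun z : ℝ => μ + z := by fun_prop
    have hmap : gaussianReal μ 1 = (gaussianReal 0 1).map (fun z => μ + z) := by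
      simpa using (gaussianReal_map_const_add (μ := 0) (v := 1) μ).symm
    have hνS : gaussianReal μ 1 S = gaussianReal 0 1 S' := by
      rw [hmap, Measure.map_apply hmb hS]
    have hne : gaussianReal 0 1 S' ≠ 0 := by rw [← hνS]; exact h0
    have hsurv : survival μ S = ∫ z in S', phi0 z := by
      rw [survival, hνS, gauss_measure_toReal hmeas']
    have hαpos : 0 < ∫ z in S', phi0 z := by
      rw [← gauss_measure_toReal hmeas']
      exact ENNReal.toReal_pos hne (measure_ne_top _ _)
    have hsetint : ∫ y in S, (y - μ) ^ 2 ∂(gaussianReal μ 1) = ∫ z in S', phi0 z * z ^ 2 := by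
      rw [hmap, setIntegral_map hS
        (Continuous.aestronglyMeasurable (by continuity : Continuous fun y : ℝ => (y - μ) ^ 2))
        hmb.aemeasurable]
      have : ∀ z : ℝ, (μ + z - μ) ^ 2 = z ^ 2 := fun z => by ring
      rw [show (∫ x in S', (μ + x - μ) ^ 2 ∂gaussianReal 0 1)
          = ∫ x in S', x ^ 2 ∂gaussianReal 0 1 from
        setIntegral_congr_fun hmeas' fun z _ => this z]
      exact gauss_setIntegral hmeas' (fun z => z ^ 2)
    have hcond : ∫ y, (y - μ) ^ 2 ∂(truncGaussian μ S)
        = (survival μ S)⁻¹ * ∫ y in S, (y - μ) ^ 2 ∂(gaussianReal μ 1) := by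
      rw [truncGaussian, ProbabilityTheory.cond, integral_smul_measure, ENNReal.toReal_inv,
        survival, smul_eq_mul]
    rw [hcond, hsetint, hsurv]
    have hcore := core_bound hmeas' hαpos
    rw [inv_mul_le_iff₀ hαpos]
    calc ∫ z in S', phi0 z * z ^ 2
        ≤ (2 * Real.log (1 / ∫ z in S', phi0 z) + 4) * ∫ z in S', phi0 z := hcore
      _ = (∫ z in S', phi0 z) * (2 * Real.log (1 / ∫ z in S', phi0 z) + 4) := by ring

theorem stmt12 {k n : ℕ} (S : Set ℝ) (hS : MeasurableSet S)
    (x : Fin n → EuclideanSpace ℝ (Fin k)) (wstar : EuclideanSpace ℝ (Fin k))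
    (a : ℝ) (ha0 : 0 < a) (ha1 : a < 1)
    (hx : ∀ i, ‖x i‖ ≤ 1)
    (hAI : AssumptionI S x wstar a) :
    (1 / n : ℝ) * ∑ i,
        (∫ y, (y - ⟪wstar, x i⟫) ^ 2 ∂(truncGaussian ⟪wstar, x i⟫ S)) * ‖x i‖ ^ 2 ≤
      2 * Real.log (1 / a) + 4 := by
  have hloga : 0 ≤ Real.log (1 / a) := Real.log_nonneg (one_le_one_div ha0 ha1.le)
  set L : Fin n → ℝ := fun i => Real.log (1 / survival ⟪wstar, x i⟫ S) with hLdef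
  -- per-term bound
  have hterm : ∀ i, (∫ y, (y - ⟪wstar, x i⟫) ^ 2 ∂(truncGaussian ⟪wstar, x i⟫ S)) * ‖x i‖ ^ 2
      ≤ (2 * L i + 4) * ‖x i‖ ^ 2 := fun i =>
    mul_le_mul_of_nonneg_right (cond_bound _ hS) (by positivity)
  -- norm as sum of squared inner products with basis
  have hnorm : ∀ y : EuclideanSpace ℝ (Fin k),
      ‖y‖ ^ 2 = ∑ j, ⟪EuclideanSpace.single j (1:ℝ), y⟫ ^ 2 := by
    intro y
    rw [← real_inner_self_eq_norm_sq]
    rw [PiLp.inner_apply]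
    refine Finset.sum_congr rfl fun j _ => ?_
    rw [EuclideanSpace.inner_single_left]
    simp [pow_two]
  -- quadratic form bound
  have hsumL : ∑ i, L i * ‖x i‖ ^ 2 ≤ Real.log (1 / a) * ∑ i, ‖x i‖ ^ 2 := by
    calc ∑ i, L i * ‖x i‖ ^ 2
        = ∑ j, ∑ i, L i * ⟪EuclideanSpace.single j (1:ℝ), x i⟫ ^ 2 := by
          rw [Finset.sum_comm]
          refine Finset.sum_congr rfl fun i _ => ?_
          rw [hnorm (x i), Finset.mul_sum]
      _ ≤ ∑ j, Real.log (1 / a) * ∑ i, ⟪EuclideanSpace.single j (1:ℝ), x i⟫ ^ 2 :=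
          Finset.sum_le_sum fun j _ => hAI (EuclideanSpace.single j (1:ℝ))
      _ = Real.log (1 / a) * ∑ i, ‖x i‖ ^ 2 := by
          rw [← Finset.mul_sum, Finset.sum_comm]
          congr 1
          exact Finset.sum_congr rfl fun i _ => (hnorm (x i)).symm
  have hsumnorm : ∑ i, ‖x i‖ ^ 2 ≤ (n : ℝ) := by
    calc ∑ i, ‖x i‖ ^ 2 ≤ ∑ _i : Fin n, (1:ℝ) :=
          Finset.sum_le_sum fun i _ => by nlinarith [hx i, norm_nonneg (x i)]
      _ = (n : ℝ) := by simp
  have hT : ∑ i, (∫ y, (y - ⟪wstar, x i⟫) ^ 2 ∂(truncGaussian ⟪wstar, x i⟫ S)) * ‖x i‖ ^ 2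
      ≤ (2 * Real.log (1 / a) + 4) * n := by
    calc ∑ i, (∫ y, (y - ⟪wstar, x i⟫) ^ 2 ∂(truncGaussian ⟪wstar, x i⟫ S)) * ‖x i‖ ^ 2
        ≤ ∑ i, (2 * L i + 4) * ‖x i‖ ^ 2 := Finset.sum_le_sum fun i _ => hterm i
      _ = 2 * (∑ i, L i * ‖x i‖ ^ 2) + 4 * ∑ i, ‖x i‖ ^ 2 := by
          rw [Finset.mul_sum, Finset.mul_sum, ← Finset.sum_add_distrib]
          exact Finset.sum_congr rfl fun i _ => by ring
      _ ≤ 2 * (Real.log (1 / a) * ∑ i, ‖x i‖ ^ 2) + 4 * ∑ i, ‖x i‖ ^ 2 := by linarith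
      _ = (2 * Real.log (1 / a) + 4) * ∑ i, ‖x i‖ ^ 2 := by ring
      _ ≤ (2 * Real.log (1 / a) + 4) * n :=
          mul_le_mul_of_nonneg_left hsumnorm (by linarith)
  rcases Nat.eq_zero_or_pos n with hn | hn
  · subst hn
    simp only [Finset.univ_eq_empty, Finset.sum_empty, mul_zero]
    linarith
  · have hn' : (0:ℝ) < n := by exact_mod_cast hn
    calc (1 / n : ℝ) * ∑ i,
          (∫ y, (y - ⟪wstar, x i⟫) ^ 2 ∂(truncGaussian ⟪wstar, x i⟫ S)) * ‖x i‖ ^ 2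
        ≤ (1 / n : ℝ) * ((2 * Real.log (1 / a) + 4) * n) :=
          mul_le_mul_of_nonneg_left hT (by positivity)
      _ = 2 * Real.log (1 / a) + 4 := by field_simp
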